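/- Let X₁,…,X_k be discrete random variables on finite alphabets and Z₁,…,Z_k discrete random variables such that each Z_ℓ is conditionally independent of (X_j)_{j≠ℓ} and (Z_j)_{j≠ℓ} given X_ℓ. Then H(Z₁,…,Z_k) − ∑_{ℓ=1}^k H(Z_ℓ | X_ℓ) = I(X₁,…,X_k; Z₁,…,Z_k), and ∑_{ℓ=1}^k I(X_ℓ; Z_ℓ) = I(X₁,…,X_k; Z₁,…,Z_k) + ∑_{ℓ=1}^k I(Z_ℓ; Z₁,…,Z_{ℓ−1}). -/
import Mathlib


open Real Finset

open scoped Classical in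
/-- Probability that the random variable `X` takes the value `a`, under the pmf `f`
on the finite sample space `Ω`. -/
noncomputable def pr {Ω α : Type*} [Fintype Ω] (f : Ω → ℝ) (X : Ω → α) (a : α) : ℝ :=
  ∑ ω, if X ω = a then f ω else 0

/-- Shannon entropy (natural log) of a random variable `X` on a finite space. -/
noncomputable def ent {Ω α : Type*} [Fintype Ω] [Fintype α] (f : Ω → ℝ) (X : Ω → α) : ℝ :=
  ∑ a, Real.negMulLog (pr f X a)

/-- Mutual information `I(X;Y) = H(X) + H(Y) - H(X,Y)`. -/
noncomputable def mi {Ω α β : Type*} [Fintype Ω] [Fintype α] [Fintype β]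
    (f : Ω → ℝ) (X : Ω → α) (Y : Ω → β) : ℝ :=
  ent f X + ent f Y - ent f (fun ω => (X ω, Y ω))

/-- Conditional entropy `H(X|Y) = H(X,Y) - H(Y)`. -/
noncomputable def condEnt {Ω α β : Type*} [Fintype Ω] [Fintype α] [Fintype β]
    (f : Ω → ℝ) (X : Ω → α) (Y : Ω → β) : ℝ :=
  ent f (fun ω => (X ω, Y ω)) - ent f Y

/-- Conditional mutual information
`I(X;Y|Z) = H(X,Z) + H(Y,Z) - H(X,Y,Z) - H(Z)`. -/
noncomputable def cmi {Ω α β γ : Type*} [Fintype Ω] [Fintype α] [Fintype β] [Fintype γ]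
    (f : Ω → ℝ) (X : Ω → α) (Y : Ω → β) (Z : Ω → γ) : ℝ :=
  ent f (fun ω => (X ω, Z ω)) + ent f (fun ω => (Y ω, Z ω))
    - ent f (fun ω => (X ω, Y ω, Z ω)) - ent f Z

section helpers
open scoped Classical
variable {Ω A B C : Type*} [Fintype Ω]

lemma pr_nonneg (f : Ω → ℝ) (h0 : ∀ ω, 0 ≤ f ω) (X : Ω → A) (a : A) : 0 ≤ pr f X a := by
  unfold pr
  apply Finset.sum_nonneg
  intro ω _
  split <;> simp [h0 ω]

lemma pr_comp [Fintype A] (f : Ω → ℝ) (T : Ω → A) (e : A → B) (b : B) :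
    pr f (fun ω => e (T ω)) b = ∑ a, if e a = b then pr f T a else 0 := by
  have h : ∀ a : A, (if e a = b then pr f T a else 0)
      = ∑ ω, if T ω = a then (if e a = b then f ω else 0) else 0 := by
    intro a
    unfold pr
    split <;> simp
  simp_rw [h]
  rw [Finset.sum_comm]
  unfold pr
  apply Finset.sum_congr rfl
  intro ω _
  rw [Finset.sum_ite_eq]
  simp

lemma ent_comp_inj [Fintype A] [Fintype B] (f : Ω → ℝ) (X : Ω → A) (e : A → B)
    (he : Function.Injective e) : ent f (fun ω => e (X ω)) = ent f X := by
  classical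
  unfold ent
  rw [← Finset.sum_subset (Finset.subset_univ (Finset.univ.image e))]
  · rw [Finset.sum_image (fun a _ a' _ h => he h)]
    apply Finset.sum_congr rfl
    intro a _
    congr 1
    unfold pr
    apply Finset.sum_congr rfl
    intro ω _
    simp [he.eq_iff]
  · intro b _ hb
    have : pr f (fun ω => e (X ω)) b = 0 := by
      unfold pr
      apply Finset.sum_eq_zero
      intro ω _
      rw [if_neg]
      intro h
      exact hb (Finset.mem_image.2 ⟨X ω, Finset.mem_univ _, h⟩)
    simp [this]

lemma ent_eq_of_comp [Fintype A] [Fintype B] (f : Ω → ℝ) (X : Ω → A) (Y : Ω → B)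
    (e : A → B) (he : Function.Injective e) (hY : ∀ ω, Y ω = e (X ω)) :
    ent f Y = ent f X := by
  rw [show Y = fun ω => e (X ω) from funext hY]
  exact ent_comp_inj f X e he


lemma negMulLog_eq_sum {ι : Type*} {s : Finset ι} (g : ι → ℝ) (t : ℝ) (ht : t = ∑ i ∈ s, g i) :
    negMulLog t = ∑ i ∈ s, -(g i * log t) := by
  rw [Real.negMulLog]
  nth_rewrite 1 [ht]
  rw [neg_mul, Finset.sum_mul, ← Finset.sum_neg_distrib]

lemma aux_log (p q r s : ℝ) (hp : 0 ≤ p) (hq : p ≤ q) (hr : p ≤ r) (hs : p ≤ s)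
    (h : p * q = r * s) :
    negMulLog p + -(p * log q) = -(p * log r) + -(p * log s) := by
  rcases eq_or_lt_of_le hp with h0 | h0
  · simp [← h0, negMulLog]
  · have hq0 : 0 < q := lt_of_lt_of_le h0 hq
    have hr0 : 0 < r := lt_of_lt_of_le h0 hr
    have hs0 : 0 < s := lt_of_lt_of_le h0 hs
    have hl : log p + log q = log r + log s := by
      rw [← Real.log_mul h0.ne' hq0.ne', ← Real.log_mul hr0.ne' hs0.ne', h]
    rw [Real.negMulLog]
    linear_combination (-p) * hl

variable [Fintype A] [Fintype B] [Fintype C]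

lemma ci_map {B' : Type*} [Fintype B'] (f : Ω → ℝ) (U : Ω → A) (V : Ω → B) (W : Ω → C)
    (g : B → B')
    (h : ∀ a b c, pr f (fun ω => (U ω, V ω, W ω)) (a, b, c) * pr f W c
      = pr f (fun ω => (U ω, W ω)) (a, c) * pr f (fun ω => (V ω, W ω)) (b, c)) :
    ∀ a b' c, pr f (fun ω => (U ω, g (V ω), W ω)) (a, b', c) * pr f W c
      = pr f (fun ω => (U ω, W ω)) (a, c) * pr f (fun ω => (g (V ω), W ω)) (b', c) := by
  intro a b' c
  have h1 : pr f (fun ω => (U ω, g (V ω), W ω)) (a, b', c)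
      = ∑ b, if g b = b' then pr f (fun ω => (U ω, V ω, W ω)) (a, b, c) else 0 := by
    refine (pr_comp f (fun ω => (U ω, V ω, W ω))
      (fun t : A × B × C => (t.1, g t.2.1, t.2.2)) (a, b', c)).trans ?_
    rw [Fintype.sum_prod_type]
    rw [Finset.sum_eq_single a]
    · rw [Fintype.sum_prod_type]
      apply Finset.sum_congr rfl
      intro b _
      by_cases hgb : g b = b' <;> simp [Prod.mk.injEq, hgb]
    · intro x _ hx
      apply Finset.sum_eq_zero
      intro y _
      simp [Prod.mk.injEq, hx]
    · intro hmem
      exact absurd (Finset.mem_univ a) hmem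
  have h2 : pr f (fun ω => (g (V ω), W ω)) (b', c)
      = ∑ b, if g b = b' then pr f (fun ω => (V ω, W ω)) (b, c) else 0 := by
    refine (pr_comp f (fun ω => (V ω, W ω))
      (fun t : B × C => (g t.1, t.2)) (b', c)).trans ?_
    rw [Fintype.sum_prod_type]
    apply Finset.sum_congr rfl
    intro b _
    by_cases hgb : g b = b' <;> simp [Prod.mk.injEq, hgb]
  rw [h1, h2, Finset.sum_mul, Finset.mul_sum]
  refine Finset.sum_congr rfl fun b _ => ?_
  by_cases hgb : g b = b'
  · simp only [hgb, if_true]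
    exact h a b c
  · simp [hgb]

lemma ci_ent (f : Ω → ℝ) (h0 : ∀ ω, 0 ≤ f ω) (U : Ω → A) (V : Ω → B) (W : Ω → C)
    (h : ∀ a b c, pr f (fun ω => (U ω, V ω, W ω)) (a, b, c) * pr f W c
      = pr f (fun ω => (U ω, W ω)) (a, c) * pr f (fun ω => (V ω, W ω)) (b, c)) :
    ent f (fun ω => (U ω, V ω, W ω)) + ent f W
      = ent f (fun ω => (U ω, W ω)) + ent f (fun ω => (V ω, W ω)) := by
  set p : A → B → C → ℝ := fun a b c => pr f (fun ω => (U ω, V ω, W ω)) (a, b, c) with hp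
  have hpnn : ∀ a b c, 0 ≤ p a b c := fun a b c => pr_nonneg f h0 _ _
  -- marginals
  have hq : ∀ c, pr f W c = ∑ a, ∑ b, p a b c := by
    intro c
    refine (pr_comp f (fun ω => (U ω, V ω, W ω)) (fun t : A × B × C => t.2.2) c).trans ?_
    rw [Fintype.sum_prod_type]
    apply Finset.sum_congr rfl
    intro a _
    rw [Fintype.sum_prod_type]
    apply Finset.sum_congr rfl
    intro b _
    simp [hp]
  have hr : ∀ a c, pr f (fun ω => (U ω, W ω)) (a, c) = ∑ b, p a b c := by
    intro a c
    refine (pr_comp f (fun ω => (U ω, V ω, W ω)) (fun t : A × B × C => (t.1, t.2.2)) (a, c)).trans ?_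
    rw [Fintype.sum_prod_type, Finset.sum_eq_single a]
    · rw [Fintype.sum_prod_type]
      apply Finset.sum_congr rfl
      intro b _
      simp [Prod.mk.injEq, hp]
    · intro x _ hx
      apply Finset.sum_eq_zero
      intro y _
      simp [Prod.mk.injEq, hx]
    · intro hmem
      exact absurd (Finset.mem_univ a) hmem
  have hs : ∀ b c, pr f (fun ω => (V ω, W ω)) (b, c) = ∑ a, p a b c := by
    intro b c
    refine (pr_comp f (fun ω => (U ω, V ω, W ω)) (fun t : A × B × C => (t.2.1, t.2.2)) (b, c)).trans ?_
    rw [Fintype.sum_prod_type]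
    apply Finset.sum_congr rfl
    intro a _
    rw [Fintype.sum_prod_type, Finset.sum_eq_single b]
    · simp [Prod.mk.injEq, hp]
    · intro x _ hx
      apply Finset.sum_eq_zero
      intro y _
      simp [Prod.mk.injEq, hx]
    · intro hmem
      exact absurd (Finset.mem_univ b) hmem
  -- entropy expansions
  have eUVW : ent f (fun ω => (U ω, V ω, W ω)) = ∑ c, ∑ a, ∑ b, negMulLog (p a b c) := by
    unfold ent
    simp only [Fintype.sum_prod_type]
    exact (Finset.sum_congr rfl fun a _ => Finset.sum_comm).trans Finset.sum_comm
  have eW : ent f W = ∑ c, ∑ a, ∑ b, -(p a b c * log (pr f W c)) := by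
    unfold ent
    refine Finset.sum_congr rfl fun c _ => ?_
    rw [negMulLog_eq_sum (fun a => ∑ b, p a b c) _ (hq c)]
    refine Finset.sum_congr rfl fun a _ => ?_
    rw [Finset.sum_mul, ← Finset.sum_neg_distrib]
  have eUW : ent f (fun ω => (U ω, W ω))
      = ∑ c, ∑ a, ∑ b, -(p a b c * log (pr f (fun ω => (U ω, W ω)) (a, c))) := by
    unfold ent
    simp only [Fintype.sum_prod_type]
    rw [Finset.sum_comm]
    refine Finset.sum_congr rfl fun c _ => Finset.sum_congr rfl fun a _ => ?_
    exact negMulLog_eq_sum (fun b => p a b c) _ (hr a c)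
  have eVW : ent f (fun ω => (V ω, W ω))
      = ∑ c, ∑ a, ∑ b, -(p a b c * log (pr f (fun ω => (V ω, W ω)) (b, c))) := by
    unfold ent
    simp only [Fintype.sum_prod_type]
    rw [Finset.sum_comm]
    refine Finset.sum_congr rfl fun c _ => ?_
    exact (Finset.sum_congr rfl fun b _ => negMulLog_eq_sum (fun a => p a b c) _ (hs b c)).trans
      Finset.sum_comm
  rw [eUVW, eW, eUW, eVW, ← Finset.sum_add_distrib, ← Finset.sum_add_distrib]
  refine Finset.sum_congr rfl fun c _ => ?_
  rw [← Finset.sum_add_distrib, ← Finset.sum_add_distrib]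
  refine Finset.sum_congr rfl fun a _ => ?_
  rw [← Finset.sum_add_distrib, ← Finset.sum_add_distrib]
  refine Finset.sum_congr rfl fun b _ => ?_
  refine aux_log _ _ _ _ (hpnn a b c) ?_ ?_ ?_ (h a b c)
  · rw [hq c]
    calc p a b c ≤ ∑ b', p a b' c :=
          Finset.single_le_sum (fun b' _ => hpnn a b' c) (Finset.mem_univ b)
      _ ≤ ∑ a', ∑ b', p a' b' c :=
          Finset.single_le_sum (f := fun a' => ∑ b', p a' b' c)
            (fun a' _ => Finset.sum_nonneg fun b' _ => hpnn a' b' c) (Finset.mem_univ a)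
  · rw [hr a c]
    exact Finset.single_le_sum (fun b' _ => hpnn a b' c) (Finset.mem_univ b)
  · rw [hs b c]
    exact Finset.single_le_sum (fun a' _ => hpnn a' b c) (Finset.mem_univ a)

end helpers

/-- If each `Zℓ` is conditionally independent of `(X_j, Z_j)_{j≠ℓ}` given `Xℓ`, then
`H(Z₁,…,Z_k) - ∑ℓ H(Zℓ|Xℓ) = I(X₁,…,X_k; Z₁,…,Z_k)` and
`∑ℓ I(Xℓ;Zℓ) = I(X₁,…,X_k; Z₁,…,Z_k) + ∑ℓ I(Zℓ; Z₁,…,Z_{ℓ-1})`. -/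
theorem upper_bound_identities {Ω : Type*} [Fintype Ω] {k : ℕ} {α γ : Fin k → Type*}
    [∀ ℓ, Fintype (α ℓ)] [∀ ℓ, Fintype (γ ℓ)]
    (f : Ω → ℝ) (hf0 : ∀ ω, 0 ≤ f ω) (hf1 : ∑ ω, f ω = 1)
    (X : ∀ ℓ, Ω → α ℓ) (Z : ∀ ℓ, Ω → γ ℓ)
    (hci : ∀ (ℓ : Fin k) (a : α ℓ) (c : γ ℓ) (w : ∀ j : {j : Fin k // j ≠ ℓ}, α j.1 × γ j.1),
      pr f (fun ω => (Z ℓ ω, (fun j : {j : Fin k // j ≠ ℓ} => (X j.1 ω, Z j.1 ω)), X ℓ ω))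
          (c, w, a) * pr f (X ℓ) a
        = pr f (fun ω => (Z ℓ ω, X ℓ ω)) (c, a)
          * pr f (fun ω => ((fun j : {j : Fin k // j ≠ ℓ} => (X j.1 ω, Z j.1 ω)), X ℓ ω)) (w, a)) :
    (ent f (fun ω ℓ => Z ℓ ω) - ∑ ℓ, condEnt f (Z ℓ) (X ℓ)
        = mi f (fun ω ℓ => X ℓ ω) (fun ω ℓ => Z ℓ ω)) ∧
      (∑ ℓ, mi f (X ℓ) (Z ℓ)
        = mi f (fun ω ℓ => X ℓ ω) (fun ω ℓ => Z ℓ ω)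
          + ∑ ℓ, mi f (Z ℓ) (fun ω => fun j : {j : Fin k // j < ℓ} => Z j.1 ω)) := by
  classical
  -- abbreviations
  set XX : Ω → ∀ ℓ, α ℓ := fun ω ℓ => X ℓ ω with hXX
  set ZZ : Ω → ∀ ℓ, γ ℓ := fun ω ℓ => Z ℓ ω with hZZ
  -- key conditional-independence step
  have key : ∀ (m : ℕ) (hm : m < k),
      ent f (fun ω => (XX ω, fun j : {j : Fin k // j.val < m + 1} => Z j.1 ω))
        + ent f (X ⟨m, hm⟩)
      = ent f (fun ω => (Z ⟨m, hm⟩ ω, X ⟨m, hm⟩ ω))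
        + ent f (fun ω => (XX ω, fun j : {j : Fin k // j.val < m} => Z j.1 ω)) := by
    intro m hm
    have hmap := ci_map f (Z ⟨m, hm⟩)
      (fun ω => fun j : {j : Fin k // j ≠ ⟨m, hm⟩} => (X j.1 ω, Z j.1 ω)) (X ⟨m, hm⟩)
      (fun w => ((fun j : {j : Fin k // j ≠ ⟨m, hm⟩} => (w j).1),
        (fun j : {j : Fin k // j.val < m} =>
          (w ⟨j.1, fun hh => absurd (congrArg Fin.val hh) (Nat.ne_of_lt j.2)⟩).2)))
      (fun a b c => hci ⟨m, hm⟩ c a b)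
    have hkey := ci_ent f hf0 _ _ _ hmap
    -- recode the big joint variable
    have r1 : ent f (fun ω => (Z ⟨m, hm⟩ ω,
          ((fun j : {j : Fin k // j ≠ ⟨m, hm⟩} => X j.1 ω),
           (fun j : {j : Fin k // j.val < m} => Z j.1 ω)), X ⟨m, hm⟩ ω))
        = ent f (fun ω => (XX ω, fun j : {j : Fin k // j.val < m + 1} => Z j.1 ω)) := by
      refine ent_eq_of_comp f _ _
        (fun x : (∀ ℓ, α ℓ) × (∀ j : {j : Fin k // j.val < m + 1}, γ j.1) =>
          (x.2 ⟨⟨m, hm⟩, Nat.lt_succ_self m⟩,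
            ((fun j : {j : Fin k // j ≠ ⟨m, hm⟩} => x.1 j.1),
             (fun j : {j : Fin k // j.val < m} => x.2 ⟨j.1, Nat.lt_succ_of_lt j.2⟩)),
            x.1 ⟨m, hm⟩)) ?_ ?_
      · intro x y hxy
        simp only [Prod.mk.injEq] at hxy
        obtain ⟨hz, ⟨hx', hzs⟩, hxl⟩ := hxy
        refine Prod.ext ?_ ?_
        · funext j
          by_cases hj : j = (⟨m, hm⟩ : Fin k)
          · subst hj; exact hxl
          · exact congrFun hx' ⟨j, hj⟩
        · funext j
          rcases Nat.lt_or_ge j.1.val m with hlt | hge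
          · exact congrFun hzs ⟨j.1, hlt⟩
          · have hj1 : j.1 = (⟨m, hm⟩ : Fin k) :=
              Fin.ext (Nat.le_antisymm (Nat.lt_succ_iff.mp j.2) hge)
            have hj : j = (⟨⟨m, hm⟩, Nat.lt_succ_self m⟩ :
                {j : Fin k // j.val < m + 1}) := Subtype.ext hj1
            rw [hj]; exact hz
      · intro ω; rfl
    have r2 : ent f (fun ω =>
          (((fun j : {j : Fin k // j ≠ ⟨m, hm⟩} => X j.1 ω),
            (fun j : {j : Fin k // j.val < m} => Z j.1 ω)), X ⟨m, hm⟩ ω))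
        = ent f (fun ω => (XX ω, fun j : {j : Fin k // j.val < m} => Z j.1 ω)) := by
      refine ent_eq_of_comp f _ _
        (fun x : (∀ ℓ, α ℓ) × (∀ j : {j : Fin k // j.val < m}, γ j.1) =>
          (((fun j : {j : Fin k // j ≠ ⟨m, hm⟩} => x.1 j.1), x.2), x.1 ⟨m, hm⟩)) ?_ ?_
      · intro x y hxy
        simp only [Prod.mk.injEq] at hxy
        obtain ⟨⟨hx', hzs⟩, hxl⟩ := hxy
        refine Prod.ext ?_ hzs
        funext j
        by_cases hj : j = (⟨m, hm⟩ : Fin k)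
        · subst hj; exact hxl
        · exact congrFun hx' ⟨j, hj⟩
      · intro ω; rfl
    linarith [hkey, r1, r2]
  -- filter facts
  have hfins : ∀ (m : ℕ) (hm : m < k),
      Finset.univ.filter (fun ℓ : Fin k => ℓ.val < m + 1)
        = insert ⟨m, hm⟩ (Finset.univ.filter (fun ℓ : Fin k => ℓ.val < m)) := by
    intro m hm
    ext ℓ'
    simp only [Finset.mem_filter, Finset.mem_univ, true_and, Finset.mem_insert, Fin.ext_iff]
    omega
  have hnotmem : ∀ (m : ℕ) (hm : m < k),
      (⟨m, hm⟩ : Fin k) ∉ Finset.univ.filter (fun ℓ : Fin k => ℓ.val < m) := by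
    intro m hm
    simp
  -- claim A
  have claimA : ∀ m, m ≤ k →
      ent f (fun ω => (XX ω, fun j : {j : Fin k // j.val < m} => Z j.1 ω))
        = ent f XX + ∑ ℓ ∈ Finset.univ.filter (fun ℓ : Fin k => ℓ.val < m),
            condEnt f (Z ℓ) (X ℓ) := by
    intro m
    induction m with
    | zero =>
      intro _
      have h0 : Finset.univ.filter (fun ℓ : Fin k => ℓ.val < 0) = ∅ := by
        apply Finset.filter_false_of_mem
        intro ℓ _
        exact Nat.not_lt_zero _
      rw [h0, Finset.sum_empty, add_zero]
      refine ent_eq_of_comp f XX _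
        (fun x : ∀ ℓ, α ℓ =>
          ((x, fun j : {j : Fin k // j.val < 0} => absurd j.2 (Nat.not_lt_zero _)) :
            (∀ ℓ, α ℓ) × (∀ j : {j : Fin k // j.val < 0}, γ j.1))) ?_ ?_
      · intro x y hxy
        exact congrArg Prod.fst hxy
      · intro ω
        refine Prod.ext rfl ?_
        funext j
        exact absurd j.2 (Nat.not_lt_zero _)
    | succ m ih =>
      intro hm1
      have hm : m < k := hm1
      rw [hfins m hm, Finset.sum_insert (hnotmem m hm)]
      have hk := key m hm
      have ihh := ih (Nat.le_of_lt hm1)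
      have hce : condEnt f (Z ⟨m, hm⟩) (X ⟨m, hm⟩)
          = ent f (fun ω => (Z ⟨m, hm⟩ ω, X ⟨m, hm⟩ ω)) - ent f (X ⟨m, hm⟩) := rfl
      linarith [hk, ihh, hce]
  -- claim B (chain rule for Z)
  have keyB : ∀ (m : ℕ) (hm : m < k),
      ent f (fun ω => fun j : {j : Fin k // j.val < m + 1} => Z j.1 ω)
        = ent f (fun ω => (Z ⟨m, hm⟩ ω, fun j : {j : Fin k // j.val < m} => Z j.1 ω)) := by
    intro m hm
    refine (ent_eq_of_comp f _ _
      (fun z : ∀ j : {j : Fin k // j.val < m + 1}, γ j.1 =>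
        (z ⟨⟨m, hm⟩, Nat.lt_succ_self m⟩,
         fun j : {j : Fin k // j.val < m} => z ⟨j.1, Nat.lt_succ_of_lt j.2⟩)) ?_ ?_).symm
    · intro x y hxy
      simp only [Prod.mk.injEq] at hxy
      obtain ⟨hz, hzs⟩ := hxy
      funext j
      rcases Nat.lt_or_ge j.1.val m with hlt | hge
      · exact congrFun hzs ⟨j.1, hlt⟩
      · have hj1 : j.1 = (⟨m, hm⟩ : Fin k) :=
          Fin.ext (Nat.le_antisymm (Nat.lt_succ_iff.mp j.2) hge)
        have hj : j = (⟨⟨m, hm⟩, Nat.lt_succ_self m⟩ : {j : Fin k // j.val < m + 1}) :=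
          Subtype.ext hj1
        rw [hj]; exact hz
    · intro ω; rfl
  have claimB : ∀ m, m ≤ k →
      ent f (fun ω => fun j : {j : Fin k // j.val < m} => Z j.1 ω)
        = ∑ ℓ ∈ Finset.univ.filter (fun ℓ : Fin k => ℓ.val < m),
            (ent f (fun ω => (Z ℓ ω, fun j : {j : Fin k // j < ℓ} => Z j.1 ω))
              - ent f (fun ω => fun j : {j : Fin k // j < ℓ} => Z j.1 ω)) := by
    intro m
    induction m with
    | zero =>
      intro _
      have h0 : Finset.univ.filter (fun ℓ : Fin k => ℓ.val < 0) = ∅ := by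
        apply Finset.filter_false_of_mem
        intro ℓ _
        exact Nat.not_lt_zero _
      rw [h0, Finset.sum_empty]
      haveI : Subsingleton (∀ j : {j : Fin k // j.val < 0}, γ j.1) :=
        ⟨fun a b => funext fun j => absurd j.2 (Nat.not_lt_zero _)⟩
      have hone : ∀ a : ∀ j : {j : Fin k // j.val < 0}, γ j.1,
          pr f (fun ω => fun j : {j : Fin k // j.val < 0} => Z j.1 ω) a = 1 := by
        intro a
        unfold pr
        rw [← hf1]
        apply Finset.sum_congr rfl
        intro ω _
        rw [if_pos (Subsingleton.elim _ _)]
      unfold ent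
      rw [Finset.sum_congr rfl (fun a _ => by rw [hone a, Real.negMulLog_one])]
      simp
    | succ m ih =>
      intro hm1
      have hm : m < k := hm1
      rw [hfins m hm, Finset.sum_insert (hnotmem m hm)]
      have hb := keyB m hm
      have ihh := ih (Nat.le_of_lt hm1)
      have hdefeq : ent f (fun ω => (Z ⟨m, hm⟩ ω,
            fun j : {j : Fin k // j < (⟨m, hm⟩ : Fin k)} => Z j.1 ω))
          = ent f (fun ω => (Z ⟨m, hm⟩ ω, fun j : {j : Fin k // j.val < m} => Z j.1 ω)) := rfl
      have hdefeq2 : ent f (fun ω => fun j : {j : Fin k // j < (⟨m, hm⟩ : Fin k)} => Z j.1 ω)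
          = ent f (fun ω => fun j : {j : Fin k // j.val < m} => Z j.1 ω) := rfl
      rw [hdefeq, hdefeq2]
      linarith [hb, ihh]
  -- from filters to univ
  have hfuniv : Finset.univ.filter (fun ℓ : Fin k => ℓ.val < k) = Finset.univ := by
    apply Finset.filter_true_of_mem
    intro ℓ _
    exact ℓ.isLt
  -- recodings at m = k
  have rA : ent f (fun ω => (XX ω, fun j : {j : Fin k // j.val < k} => Z j.1 ω))
      = ent f (fun ω => (XX ω, ZZ ω)) := by
    refine ent_eq_of_comp f _ _
      (fun x : (∀ ℓ, α ℓ) × (∀ ℓ, γ ℓ) =>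
        ((x.1, fun j : {j : Fin k // j.val < k} => x.2 j.1) :
          (∀ ℓ, α ℓ) × (∀ j : {j : Fin k // j.val < k}, γ j.1))) ?_ ?_
    · intro x y hxy
      simp only [Prod.mk.injEq] at hxy
      obtain ⟨h1, h2⟩ := hxy
      refine Prod.ext h1 ?_
      funext j
      exact congrFun h2 ⟨j, j.isLt⟩
    · intro ω; rfl
  have rB : ent f (fun ω => fun j : {j : Fin k // j.val < k} => Z j.1 ω) = ent f ZZ := by
    refine ent_eq_of_comp f ZZ _
      (fun z : ∀ ℓ, γ ℓ => fun j : {j : Fin k // j.val < k} => z j.1) ?_ ?_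
    · intro x y hxy
      funext j
      exact congrFun hxy ⟨j, j.isLt⟩
    · intro ω; rfl
  have hA : ent f (fun ω => (XX ω, ZZ ω))
      = ent f XX + ∑ ℓ, condEnt f (Z ℓ) (X ℓ) := by
    have := claimA k le_rfl
    rw [hfuniv, rA] at this
    exact this
  have hB : ent f ZZ
      = ∑ ℓ, (ent f (fun ω => (Z ℓ ω, fun j : {j : Fin k // j < ℓ} => Z j.1 ω))
          - ent f (fun ω => fun j : {j : Fin k // j < ℓ} => Z j.1 ω)) := by
    have := claimB k le_rfl
    rw [hfuniv, rB] at this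
    exact this
  constructor
  · simp only [mi]
    linarith [hA]
  · have hswap : ∀ ℓ, ent f (fun ω => (X ℓ ω, Z ℓ ω)) = ent f (fun ω => (Z ℓ ω, X ℓ ω)) := by
      intro ℓ
      exact ent_eq_of_comp f (fun ω => (Z ℓ ω, X ℓ ω)) (fun ω => (X ℓ ω, Z ℓ ω))
        (Prod.swap : γ ℓ × α ℓ → α ℓ × γ ℓ) Prod.swap_injective (fun ω => rfl)
    have hsum1 : ∑ ℓ, mi f (X ℓ) (Z ℓ)
        = (∑ ℓ, ent f (Z ℓ)) - ∑ ℓ, condEnt f (Z ℓ) (X ℓ) := by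
      rw [← Finset.sum_sub_distrib]
      apply Finset.sum_congr rfl
      intro ℓ _
      simp only [mi, condEnt]
      rw [hswap ℓ]
      ring
    have hsum2 : ∑ ℓ, mi f (Z ℓ) (fun ω => fun j : {j : Fin k // j < ℓ} => Z j.1 ω)
        = (∑ ℓ, ent f (Z ℓ))
          - ∑ ℓ, (ent f (fun ω => (Z ℓ ω, fun j : {j : Fin k // j < ℓ} => Z j.1 ω))
              - ent f (fun ω => fun j : {j : Fin k // j < ℓ} => Z j.1 ω)) := by
      rw [← Finset.sum_sub_distrib]
      apply Finset.sum_congr rfl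
      intro ℓ _
      simp only [mi]
      ring
    rw [hsum1, hsum2, ← hB]
    simp only [mi]
    linarith [hA]
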